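/- Let G be a finite group of even order. Then G has a subgroup H with 1 < H which is a 2-group with a unique involution (i.e., cyclic or generalized quaternion) and which is a subgroup perfect code of G (admits an inverse-closed right transversal). -/

import Mathlib

set_option linter.unusedSectionVars false
namespace Stmt12Aux

variable {G : Type*} [Group G] [Fintype G] (H : Subgroup G)

/-- same right coset relation helpers -/
lemma rc_symm {u v : G} (h : u * v⁻¹ ∈ H) : v * u⁻¹ ∈ H := by
  have := H.inv_mem h
  simpa [mul_inv_rev, mul_assoc] using this

lemma rc_trans {u v w : G} (h1 : u * v⁻¹ ∈ H) (h2 : v * w⁻¹ ∈ H) :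
    u * w⁻¹ ∈ H := by
  have := H.mul_mem h1 h2
  simpa [mul_assoc] using this

/-- double coset of x -/
def dcos (x : G) : Set G := {u | ∃ h₁ ∈ H, ∃ h₂ ∈ H, u = h₁ * x * h₂}

lemma mem_dcos_self (x : G) : x ∈ dcos H x :=
  ⟨1, H.one_mem, 1, H.one_mem, by group⟩

lemma dcos_left_mul {x u : G} (hu : u ∈ dcos H x) {h : G} (hh : h ∈ H) :
    h * u ∈ dcos H x := by
  obtain ⟨h₁, hh₁, h₂, hh₂, rfl⟩ := hu
  exact ⟨h * h₁, H.mul_mem hh hh₁, h₂, hh₂, by group⟩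

lemma rc_dcos {x u v : G} (hu : u ∈ dcos H x) (hv : v * u⁻¹ ∈ H) :
    v ∈ dcos H x := by
  have : v = (v * u⁻¹) * u := by group
  rw [this]
  exact dcos_left_mul H hu hv

lemma inv_dcos {x u : G} (hu : u ∈ dcos H x) : u⁻¹ ∈ dcos H x⁻¹ := by
  obtain ⟨h₁, hh₁, h₂, hh₂, rfl⟩ := hu
  exact ⟨h₂⁻¹, H.inv_mem hh₂, h₁⁻¹, H.inv_mem hh₁, by group⟩

lemma dcos_sym_eq {x : G} (hs : x⁻¹ ∈ dcos H x) : dcos H x⁻¹ = dcos H x := by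
  obtain ⟨a, ha, b, hb, hx⟩ := hs
  ext u
  have hx' : x = b⁻¹ * (x⁻¹ * a⁻¹) := by
    have := congrArg (fun w => w⁻¹) hx
    simpa [mul_inv_rev, mul_assoc] using this
  constructor
  · rintro ⟨h₁, hh₁, h₂, hh₂, rfl⟩
    refine ⟨h₁ * a, H.mul_mem hh₁ ha, b * h₂, H.mul_mem hb hh₂, ?_⟩
    conv_lhs => rw [hx]
    group
  · rintro ⟨h₁, hh₁, h₂, hh₂, rfl⟩
    refine ⟨h₁ * b⁻¹, H.mul_mem hh₁ (H.inv_mem hb),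
      a⁻¹ * h₂, H.mul_mem (H.inv_mem ha) hh₂, ?_⟩
    conv_lhs => rw [hx']
    group

/-- extraction of a system of right-coset representatives from a finite
union of right cosets -/
lemma exists_reps :
    ∀ (m : ℕ) (U : Set G), U.ncard ≤ m →
    (∀ u ∈ U, ∀ h ∈ H, h * u ∈ U) →
    ∃ A : Finset G, (↑A : Set G) ⊆ U ∧
      (∀ a ∈ A, ∀ b ∈ A, a * b⁻¹ ∈ H → a = b) ∧
      (∀ u ∈ U, ∃ a ∈ A, u * a⁻¹ ∈ H) := by
  intro m
  induction m with
  | zero =>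
    intro U hcard _
    have hU : U = ∅ := (Set.ncard_eq_zero (Set.toFinite U)).mp (Nat.le_zero.mp hcard)
    subst hU
    exact ⟨∅, by simp, by simp, by simp⟩
  | succ m ih =>
    intro U hcard hcl
    rcases Set.eq_empty_or_nonempty U with hU | ⟨u, hu⟩
    · subst hU; exact ⟨∅, by simp, by simp, by simp⟩
    · set C : Set G := {v | v * u⁻¹ ∈ H} with hC
      have hCU : C ⊆ U := by
        intro v hv
        have : (v * u⁻¹) * u ∈ U := hcl u hu _ hv
        simpa [mul_assoc] using this
      have huC : u ∈ C := by
        simp only [hC, Set.mem_setOf_eq, mul_inv_cancel]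
        exact H.one_mem
      have hU' : (U \ C).ncard ≤ m := by
        have hlt : (U \ C).ncard < U.ncard := by
          apply Set.ncard_lt_ncard _ (Set.toFinite U)
          constructor
          · exact Set.diff_subset
          · intro hsub
            exact (hsub hu).2 huC
        omega
      have hcl' : ∀ v ∈ U \ C, ∀ h ∈ H, h * v ∈ U \ C := by
        rintro v ⟨hvU, hvC⟩ h hh
        refine ⟨hcl v hvU h hh, ?_⟩
        intro hmem
        apply hvC
        have : h⁻¹ * (h * v * u⁻¹) ∈ H := H.mul_mem (H.inv_mem hh) hmem
        simpa [hC, mul_assoc] using this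
      obtain ⟨A', hA'U, hA'pd, hA'cov⟩ := ih (U \ C) hU' hcl'
      classical
      refine ⟨insert u A', ?_, ?_, ?_⟩
      · intro a ha
        rcases Finset.mem_insert.mp (Finset.mem_coe.mp ha) with rfl | ha'
        · exact hu
        · exact (hA'U ha').1
      · intro a ha b hb hab
        rcases Finset.mem_insert.mp ha with rfl | ha' <;>
          rcases Finset.mem_insert.mp hb with rfl | hb'
        · rfl
        · exact absurd (rc_symm H hab) (hA'U hb').2
        · exact absurd hab (hA'U ha').2
        · exact hA'pd a ha' b hb' hab
      · intro v hv
        by_cases hvC : v ∈ C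
        · exact ⟨u, Finset.mem_insert_self _ _, hvC⟩
        · obtain ⟨a, ha, hva⟩ := hA'cov v ⟨hv, hvC⟩
          exact ⟨a, Finset.mem_insert_of_mem ha, hva⟩


/-- one-sided normalizing implies two-sided (finiteness) -/
lemma conj_inv_mem {n : G} (hn : ∀ h ∈ H, n * h * n⁻¹ ∈ H) :
    ∀ h ∈ H, n⁻¹ * h * n ∈ H := by
  have hinj : Function.Injective (fun h : ↥H => (⟨n * h * n⁻¹, hn h h.2⟩ : ↥H)) := by
    intro a b hab
    have : n * (a : G) * n⁻¹ = n * (b : G) * n⁻¹ := congrArg Subtype.val hab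
    have : (a : G) = b := by
      have := congrArg (fun w => n⁻¹ * w * n) this
      simpa [mul_assoc] using this
    exact Subtype.ext this
  have hsurj := (Finite.injective_iff_surjective).mp hinj
  intro h hh
  obtain ⟨⟨h', hh'⟩, he⟩ := hsurj ⟨h, hh⟩
  have : n * h' * n⁻¹ = h := congrArg Subtype.val he
  have : n⁻¹ * h * n = h' := by
    rw [← this]; group
  rw [this]; exact hh'

/-- fiber counting: number of coset reps of a double coset times the size of
`H ∩ x⁻¹ H x` equals the size of `H` -/
lemma card_reps (x : G) (A : Finset G)
    (hsub : ∀ a ∈ A, a ∈ dcos H x)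
    (hpd : ∀ a ∈ A, ∀ b ∈ A, a * b⁻¹ ∈ H → a = b)
    (hcov : ∀ u ∈ dcos H x, ∃ a ∈ A, u * a⁻¹ ∈ H) :
    A.card * ({k : G | k ∈ H ∧ x * k * x⁻¹ ∈ H}).ncard = (H : Set G).ncard := by
  classical
  set K : Set G := {k : G | k ∈ H ∧ x * k * x⁻¹ ∈ H} with hK
  set HF : Finset G := (H : Set G).toFinset with hHF
  have hmemHF : ∀ g : G, g ∈ HF ↔ g ∈ H := by
    intro g; simp [hHF]
  -- the coset-rep map
  have hex : ∀ h ∈ HF, ∃ a, a ∈ A ∧ (x * h) * a⁻¹ ∈ H := by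
    intro h hh
    obtain ⟨a, ha, hrc⟩ := hcov (x * h)
      ⟨1, H.one_mem, h, (hmemHF h).mp hh, by group⟩
    exact ⟨a, ha, hrc⟩
  set σ : G → G := fun h =>
    if hh : ∃ a, a ∈ A ∧ (x * h) * a⁻¹ ∈ H then hh.choose else 1 with hσ
  have hσA : ∀ h ∈ HF, σ h ∈ A := by
    intro h hh
    simp only [hσ, dif_pos (hex h hh)]
    exact (hex h hh).choose_spec.1
  have hσrc : ∀ h ∈ HF, (x * h) * (σ h)⁻¹ ∈ H := by
    intro h hh
    simp only [hσ, dif_pos (hex h hh)]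
    exact (hex h hh).choose_spec.2
  have hσeq : ∀ h ∈ HF, ∀ a ∈ A, (x * h) * a⁻¹ ∈ H → σ h = a := by
    intro h hh a ha hrc
    exact hpd _ (hσA h hh) _ ha (rc_trans H (rc_symm H (hσrc h hh)) hrc)
  have hcount := Finset.card_eq_sum_card_fiberwise hσA
  -- each fiber has size K.ncard
  have hfib : ∀ a ∈ A, (HF.filter (fun h => σ h = a)).card = K.ncard := by
    intro a ha
    obtain ⟨h₁, hh₁, h₂, hh₂, haeq⟩ := hsub a ha
    rw [Set.ncard_eq_toFinset_card']
    apply Finset.card_bij (fun h _ => h * h₂⁻¹)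
    · -- maps into K
      intro h hh
      simp only [Finset.mem_filter] at hh
      obtain ⟨hhH, hfa⟩ := hh
      have hrc : (x * h) * a⁻¹ ∈ H := by
        rw [← hfa]; exact hσrc h hhH
      have h1 : x * h * (h₂⁻¹ * x⁻¹ * h₁⁻¹) ∈ H := by
        rw [haeq] at hrc; simpa [mul_assoc, mul_inv_rev] using hrc
      have h2 : x * (h * h₂⁻¹) * x⁻¹ ∈ H := by
        have := H.mul_mem h1 hh₁
        simpa [mul_assoc] using this
      have h3 : h * h₂⁻¹ ∈ H := H.mul_mem ((hmemHF h).mp hhH) (H.inv_mem hh₂)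
      simp only [Set.mem_toFinset]
      exact ⟨h3, h2⟩
    · -- injective
      intro h hh h' hh' he
      exact mul_right_cancel he
    · -- surjective
      intro k hk
      simp only [Set.mem_toFinset, hK, Set.mem_setOf_eq] at hk
      obtain ⟨hkH, hkconj⟩ := hk
      refine ⟨k * h₂, ?_, by group⟩
      have hmem : k * h₂ ∈ HF := (hmemHF _).mpr (H.mul_mem hkH hh₂)
      simp only [Finset.mem_filter]
      refine ⟨hmem, ?_⟩
      apply hσeq _ hmem a ha
      have : (x * (k * h₂)) * a⁻¹ = (x * k * x⁻¹) * h₁⁻¹ := by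
        rw [haeq]; group
      rw [this]
      exact H.mul_mem hkconj (H.inv_mem hh₁)
  calc A.card * K.ncard = ∑ a ∈ A, K.ncard := by rw [Finset.sum_const, smul_eq_mul]
    _ = ∑ a ∈ A, (HF.filter (fun h => σ h = a)).card := by
        apply Finset.sum_congr rfl
        intro a ha; exact (hfib a ha).symm
    _ = HF.card := hcount.symm
    _ = (H : Set G).ncard := (Set.ncard_eq_toFinset_card' _).symm


lemma ncard_K_inv (x : G) :
    ({k : G | k ∈ H ∧ x⁻¹ * k * (x⁻¹)⁻¹ ∈ H}).ncard
      = ({k : G | k ∈ H ∧ x * k * x⁻¹ ∈ H}).ncard := by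
  have hinj : Function.Injective (fun k : G => x * k * x⁻¹) := by
    intro a b hab
    have := congrArg (fun w => x⁻¹ * w * x) hab
    simpa [mul_assoc] using this
  have himg : {k : G | k ∈ H ∧ x⁻¹ * k * (x⁻¹)⁻¹ ∈ H}
      = (fun k : G => x * k * x⁻¹) '' {k : G | k ∈ H ∧ x * k * x⁻¹ ∈ H} := by
    ext k'
    simp only [Set.mem_setOf_eq, Set.mem_image, inv_inv]
    constructor
    · rintro ⟨hk'H, hconj⟩
      refine ⟨x⁻¹ * k' * x, ⟨hconj, ?_⟩, by group⟩
      have : x * (x⁻¹ * k' * x) * x⁻¹ = k' := by group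
      rw [this]; exact hk'H
    · rintro ⟨k, ⟨hkH, hconj⟩, rfl⟩
      refine ⟨hconj, ?_⟩
      have : x⁻¹ * (x * k * x⁻¹) * x = k := by group
      rw [this]; exact hkH
  rw [himg, Set.ncard_image_of_injective _ hinj]

/-- the inner pairing lemma -/
lemma inner (x : G) : ∀ (n : ℕ) (A B : Finset G), A.card = n → B.card = n →
    Disjoint A B →
    (∀ a ∈ A, a ∈ dcos H x) → (∀ b ∈ B, b ∈ dcos H x⁻¹) →
    (∀ u, (u ∈ A ∨ u ∈ B) → ∀ v, (v ∈ A ∨ v ∈ B) → u * v⁻¹ ∈ H → u = v) →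
    ∃ T : Finset G,
      (∀ t ∈ T, t⁻¹ ∈ T) ∧
      (∀ t ∈ T, ∃ c, (c ∈ A ∨ c ∈ B) ∧ t * c⁻¹ ∈ H) ∧
      (∀ c, (c ∈ A ∨ c ∈ B) → ∃ t ∈ T, t * c⁻¹ ∈ H) ∧
      (∀ t₁ ∈ T, ∀ t₂ ∈ T, t₁ * t₂⁻¹ ∈ H → t₁ = t₂) := by
  classical
  intro n
  induction n with
  | zero =>
    intro A B hA hB _ _ _ _
    have hA0 : A = ∅ := Finset.card_eq_zero.mp hA
    have hB0 : B = ∅ := Finset.card_eq_zero.mp hB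
    subst hA0; subst hB0
    refine ⟨∅, by simp, by simp, ?_, by simp⟩
    rintro c (hc | hc) <;> simp at hc
  | succ n ih =>
    intro A B hA hB hdisj hAd hBd hpd
    obtain ⟨a, ha⟩ := Finset.card_pos.mp (by omega : 0 < A.card)
    obtain ⟨b, hb⟩ := Finset.card_pos.mp (by omega : 0 < B.card)
    obtain ⟨h₁, hh₁, h₂, hh₂, haeq⟩ := hAd a ha
    obtain ⟨k₁, hk₁, k₂, hk₂, hbeq⟩ := hBd b hb
    set y : G := k₂⁻¹ * x * h₂ with hy
    have hya : y * a⁻¹ ∈ H := by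
      have : y * a⁻¹ = k₂⁻¹ * h₁⁻¹ := by rw [hy, haeq]; group
      rw [this]; exact H.mul_mem (H.inv_mem hk₂) (H.inv_mem hh₁)
    have hyb : y⁻¹ * b⁻¹ ∈ H := by
      have : y⁻¹ * b⁻¹ = h₂⁻¹ * k₁⁻¹ := by rw [hy, hbeq]; group
      rw [this]; exact H.mul_mem (H.inv_mem hh₂) (H.inv_mem hk₁)
    have hab : a ≠ b := by
      intro h
      subst h
      exact (Finset.disjoint_left.mp hdisj ha) hb
    have hnab : ¬ (a * b⁻¹ ∈ H) := by
      intro h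
      exact hab (hpd a (Or.inl ha) b (Or.inr hb) h)
    have hnyy : ¬ (y * (y⁻¹)⁻¹ ∈ H) := by
      intro h
      exact hnab (rc_trans H (rc_trans H (rc_symm H hya) h) hyb)
    have hA' : (A.erase a).card = n := by
      rw [Finset.card_erase_of_mem ha, hA]; omega
    have hB' : (B.erase b).card = n := by
      rw [Finset.card_erase_of_mem hb, hB]; omega
    have hsub' : ∀ c, (c ∈ A.erase a ∨ c ∈ B.erase b) → (c ∈ A ∨ c ∈ B) :=
      fun c h => h.imp (Finset.mem_of_mem_erase) (Finset.mem_of_mem_erase)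
    obtain ⟨T', hT'inv, hT'in, hT'cov, hT'pd⟩ := ih (A.erase a) (B.erase b) hA' hB'
      (hdisj.mono (Finset.erase_subset _ _) (Finset.erase_subset _ _))
      (fun c hc => hAd c (Finset.mem_of_mem_erase hc))
      (fun c hc => hBd c (Finset.mem_of_mem_erase hc))
      (fun u hu v hv h => hpd u (hsub' u hu) v (hsub' v hv) h)
    have hT'a : ∀ t ∈ T', ¬ (t * a⁻¹ ∈ H) := by
      intro t ht h
      obtain ⟨c, hc, hrc⟩ := hT'in t ht
      have hca : c = a := hpd c (hsub' c hc) a (Or.inl ha)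
        (rc_trans H (rc_symm H hrc) h)
      subst hca
      rcases hc with hcA | hcB
      · exact (Finset.notMem_erase _ _) hcA
      · exact (Finset.disjoint_left.mp hdisj ha) (Finset.mem_of_mem_erase hcB)
    have hT'b : ∀ t ∈ T', ¬ (t * b⁻¹ ∈ H) := by
      intro t ht h
      obtain ⟨c, hc, hrc⟩ := hT'in t ht
      have hcb : c = b := hpd c (hsub' c hc) b (Or.inr hb)
        (rc_trans H (rc_symm H hrc) h)
      subst hcb
      rcases hc with hcA | hcB
      · exact (Finset.disjoint_right.mp hdisj hb) (Finset.mem_of_mem_erase hcA)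
      · exact (Finset.notMem_erase _ _) hcB
    refine ⟨insert y (insert y⁻¹ T'), ?_, ?_, ?_, ?_⟩
    · intro t ht
      rcases Finset.mem_insert.mp ht with rfl | ht'
      · exact Finset.mem_insert_of_mem (Finset.mem_insert_self _ _)
      rcases Finset.mem_insert.mp ht' with rfl | ht''
      · rw [inv_inv]; exact Finset.mem_insert_self _ _
      · exact Finset.mem_insert_of_mem (Finset.mem_insert_of_mem (hT'inv t ht''))
    · intro t ht
      rcases Finset.mem_insert.mp ht with rfl | ht'
      · exact ⟨a, Or.inl ha, hya⟩
      rcases Finset.mem_insert.mp ht' with rfl | ht''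
      · exact ⟨b, Or.inr hb, hyb⟩
      · obtain ⟨c, hc, hrc⟩ := hT'in t ht''
        exact ⟨c, hsub' c hc, hrc⟩
    · rintro c (hcA | hcB)
      · by_cases hca : c = a
        · subst hca
          exact ⟨y, Finset.mem_insert_self _ _, hya⟩
        · obtain ⟨t, ht, hrc⟩ := hT'cov c (Or.inl (Finset.mem_erase.mpr ⟨hca, hcA⟩))
          exact ⟨t, Finset.mem_insert_of_mem (Finset.mem_insert_of_mem ht), hrc⟩
      · by_cases hcb : c = b
        · subst hcb
          exact ⟨y⁻¹, Finset.mem_insert_of_mem (Finset.mem_insert_self _ _), hyb⟩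
        · obtain ⟨t, ht, hrc⟩ := hT'cov c (Or.inr (Finset.mem_erase.mpr ⟨hcb, hcB⟩))
          exact ⟨t, Finset.mem_insert_of_mem (Finset.mem_insert_of_mem ht), hrc⟩
    · intro t₁ ht₁ t₂ ht₂ hrc
      rcases Finset.mem_insert.mp ht₁ with rfl | ht₁'
      · rcases Finset.mem_insert.mp ht₂ with rfl | ht₂'
        · rfl
        rcases Finset.mem_insert.mp ht₂' with rfl | ht₂''
        · exact absurd hrc hnyy
        · exact absurd (rc_trans H (rc_symm H hrc) hya) (hT'a t₂ ht₂'')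
      rcases Finset.mem_insert.mp ht₁' with rfl | ht₁''
      · rcases Finset.mem_insert.mp ht₂ with rfl | ht₂'
        · exact absurd (rc_symm H hrc) hnyy
        rcases Finset.mem_insert.mp ht₂' with rfl | ht₂''
        · rfl
        · exact absurd (rc_trans H (rc_symm H hrc) hyb) (hT'b t₂ ht₂'')
      · rcases Finset.mem_insert.mp ht₂ with rfl | ht₂'
        · exact absurd (rc_trans H hrc hya) (hT'a t₁ ht₁'')
        rcases Finset.mem_insert.mp ht₂' with rfl | ht₂''
        · exact absurd (rc_trans H hrc hyb) (hT'b t₁ ht₁'')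
        · exact hT'pd t₁ ht₁'' t₂ ht₂'' hrc


lemma dcos_right_mul {x u : G} (hu : u ∈ dcos H x) {h : G} (hh : h ∈ H) :
    u * h ∈ dcos H x := by
  obtain ⟨h₁, hh₁, h₂, hh₂, rfl⟩ := hu
  exact ⟨h₁, hh₁, h₂ * h, H.mul_mem hh₂ hh, by group⟩

lemma sym_of_both {x u : G} (h1 : u ∈ dcos H x) (h2 : u ∈ dcos H x⁻¹) :
    x⁻¹ ∈ dcos H x := by
  obtain ⟨h₁, hh₁, h₂, hh₂, he₁⟩ := h1
  obtain ⟨k₁, hk₁, k₂, hk₂, he₂⟩ := h2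
  have hthis : h₁ * x * h₂ = k₁ * x⁻¹ * k₂ := he₁ ▸ he₂
  refine ⟨k₁⁻¹ * h₁, H.mul_mem (H.inv_mem hk₁) hh₁,
    h₂ * k₂⁻¹, H.mul_mem hh₂ (H.inv_mem hk₂), ?_⟩
  have he : k₁⁻¹ * h₁ * x * (h₂ * k₂⁻¹) = k₁⁻¹ * (h₁ * x * h₂) * k₂⁻¹ := by group
  rw [he, hthis]
  group

lemma outer
    (hP1 : ∀ n : G, (∀ h ∈ H, n * h * n⁻¹ ∈ H) → n * n ∈ H →
      ∃ t, t * n⁻¹ ∈ H ∧ t * t = 1)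
    (h2 : IsPGroup 2 H) :
    ∀ (m : ℕ) (U : Set G), U.ncard ≤ m →
    (∀ u ∈ U, ∀ h₁ ∈ H, ∀ h₂ ∈ H, h₁ * u * h₂ ∈ U) →
    (∀ u ∈ U, u⁻¹ ∈ U) →
    ∃ T : Set G, T ⊆ U ∧ (∀ t ∈ T, t⁻¹ ∈ T) ∧
      (∀ t₁ ∈ T, ∀ t₂ ∈ T, t₁ * t₂⁻¹ ∈ H → t₁ = t₂) ∧
      (∀ u ∈ U, ∃ t ∈ T, u * t⁻¹ ∈ H) := by
  haveI : Fact (Nat.Prime 2) := ⟨Nat.prime_two⟩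
  intro m
  induction m with
  | zero =>
    intro U hcard _ _
    have hU : U = ∅ := (Set.ncard_eq_zero (Set.toFinite U)).mp (Nat.le_zero.mp hcard)
    subst hU
    exact ⟨∅, by simp, by simp, by simp, by simp⟩
  | succ m ih =>
    intro U hcard hcl hinv
    rcases Set.eq_empty_or_nonempty U with hU | ⟨x, hx⟩
    · subst hU; exact ⟨∅, by simp, by simp, by simp, by simp⟩
    set E : Set G := dcos H x ∪ dcos H x⁻¹ with hE
    have hxE : x ∈ E := Or.inl (mem_dcos_self H x)
    have hEU : E ⊆ U := by
      rintro u (⟨h₁, hh₁, h₂, hh₂, rfl⟩ | ⟨h₁, hh₁, h₂, hh₂, rfl⟩)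
      · exact hcl x hx h₁ hh₁ h₂ hh₂
      · exact hcl x⁻¹ (hinv x hx) h₁ hh₁ h₂ hh₂
    have hErc : ∀ u ∈ E, ∀ v : G, v * u⁻¹ ∈ H → v ∈ E := by
      rintro u (hu | hu) v hv
      · exact Or.inl (rc_dcos H hu hv)
      · exact Or.inr (rc_dcos H hu hv)
    have hEinv : ∀ u ∈ E, u⁻¹ ∈ E := by
      rintro u (hu | hu)
      · exact Or.inr (inv_dcos H hu)
      · have := inv_dcos H hu
        rw [inv_inv] at this
        exact Or.inl this
    have hEmul : ∀ u ∈ E, ∀ h₁ ∈ H, ∀ h₂ ∈ H, h₁ * u * h₂ ∈ E := by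
      rintro u (hu | hu) h₁ hh₁ h₂ hh₂
      · exact Or.inl (dcos_right_mul H (dcos_left_mul H hu hh₁) hh₂)
      · exact Or.inr (dcos_right_mul H (dcos_left_mul H hu hh₁) hh₂)
    -- recursive call on U \ E
    have hU'card : (U \ E).ncard ≤ m := by
      have hlt : (U \ E).ncard < U.ncard := by
        apply Set.ncard_lt_ncard _ (Set.toFinite U)
        exact ⟨Set.diff_subset, fun hsub => (hsub hx).2 hxE⟩
      omega
    have hcl' : ∀ u ∈ U \ E, ∀ h₁ ∈ H, ∀ h₂ ∈ H, h₁ * u * h₂ ∈ U \ E := by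
      rintro u ⟨huU, huE⟩ h₁ hh₁ h₂ hh₂
      refine ⟨hcl u huU h₁ hh₁ h₂ hh₂, fun hmem => huE ?_⟩
      have : h₁⁻¹ * (h₁ * u * h₂) * h₂⁻¹ ∈ E :=
        hEmul _ hmem h₁⁻¹ (H.inv_mem hh₁) h₂⁻¹ (H.inv_mem hh₂)
      simpa [mul_assoc] using this
    have hinv' : ∀ u ∈ U \ E, u⁻¹ ∈ U \ E := by
      rintro u ⟨huU, huE⟩
      refine ⟨hinv u huU, fun hmem => huE ?_⟩
      have := hEinv u⁻¹ hmem
      rwa [inv_inv] at this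
    obtain ⟨T', hT'U, hT'inv, hT'pd, hT'cov⟩ := ih (U \ E) hU'card hcl' hinv'
    -- combining a transversal of E with T'
    have hcomb : ∀ TE : Set G, TE ⊆ E → (∀ t ∈ TE, t⁻¹ ∈ TE) →
        (∀ t₁ ∈ TE, ∀ t₂ ∈ TE, t₁ * t₂⁻¹ ∈ H → t₁ = t₂) →
        (∀ u ∈ E, ∃ t ∈ TE, u * t⁻¹ ∈ H) →
        ∃ T : Set G, T ⊆ U ∧ (∀ t ∈ T, t⁻¹ ∈ T) ∧
          (∀ t₁ ∈ T, ∀ t₂ ∈ T, t₁ * t₂⁻¹ ∈ H → t₁ = t₂) ∧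
          (∀ u ∈ U, ∃ t ∈ T, u * t⁻¹ ∈ H) := by
      intro TE hTEsub hTEinv hTEpd hTEcov
      refine ⟨TE ∪ T', ?_, ?_, ?_, ?_⟩
      · rintro t (ht | ht)
        · exact hEU (hTEsub ht)
        · exact (hT'U ht).1
      · rintro t (ht | ht)
        · exact Or.inl (hTEinv t ht)
        · exact Or.inr (hT'inv t ht)
      · rintro t₁ (ht₁ | ht₁) t₂ (ht₂ | ht₂) hrc
        · exact hTEpd t₁ ht₁ t₂ ht₂ hrc
        · exact absurd (hErc t₁ (hTEsub ht₁) t₂ (rc_symm H hrc)) (hT'U ht₂).2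
        · exact absurd (hErc t₂ (hTEsub ht₂) t₁ hrc) (hT'U ht₁).2
        · exact hT'pd t₁ ht₁ t₂ ht₂ hrc
      · intro u huU
        by_cases huE : u ∈ E
        · obtain ⟨t, ht, hrc⟩ := hTEcov u huE
          exact ⟨t, Or.inl ht, hrc⟩
        · obtain ⟨t, ht, hrc⟩ := hT'cov u ⟨huU, huE⟩
          exact ⟨t, Or.inr ht, hrc⟩
    by_cases hNorm : ∀ h ∈ H, x * h * x⁻¹ ∈ H
    · have hNorm' := conj_inv_mem H hNorm
      by_cases hx2 : x * x ∈ H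
      · -- single self-inverse coset
        obtain ⟨t, htx, ht2⟩ := hP1 x hNorm hx2
        have hEcos : ∀ u ∈ E, u * x⁻¹ ∈ H := by
          rintro u (⟨h₁, hh₁, h₂, hh₂, rfl⟩ | ⟨h₁, hh₁, h₂, hh₂, rfl⟩)
          · have he : h₁ * x * h₂ * x⁻¹ = h₁ * (x * h₂ * x⁻¹) := by group
            rw [he]
            exact H.mul_mem hh₁ (hNorm h₂ hh₂)
          · have he : h₁ * x⁻¹ * h₂ * x⁻¹ = h₁ * (x⁻¹ * h₂ * x) * (x * x)⁻¹ := by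
              group
            rw [he]
            exact H.mul_mem (H.mul_mem hh₁ (hNorm' h₂ hh₂)) (H.inv_mem hx2)
        apply hcomb {t}
        · intro u hu
          rcases hu with rfl
          exact Or.inl (rc_dcos H (mem_dcos_self H x) htx)
        · intro u hu
          rcases hu with rfl
          have : u⁻¹ = u := (eq_inv_of_mul_eq_one_left ht2).symm
          rw [this]; exact rfl
        · intro t₁ ht₁ t₂ ht₂ _
          rcases ht₁ with rfl; rcases ht₂ with rfl; rfl
        · intro u huE
          refine ⟨t, rfl, ?_⟩
          have he : u * t⁻¹ = (u * x⁻¹) * (t * x⁻¹)⁻¹ := by group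
          rw [he]
          exact H.mul_mem (hEcos u huE) (H.inv_mem htx)
      · -- pair of normalizer cosets
        apply hcomb {x, x⁻¹}
        · intro u hu
          rcases hu with hu | hu
          · rw [hu]; exact Or.inl (mem_dcos_self H x)
          · rw [Set.mem_singleton_iff] at hu
            rw [hu]; exact Or.inr (mem_dcos_self H x⁻¹)
        · intro u hu
          rcases hu with hu | hu
          · rw [hu]; exact Or.inr rfl
          · rw [Set.mem_singleton_iff] at hu
            rw [hu, inv_inv]; exact Or.inl rfl
        · intro t₁ ht₁ t₂ ht₂ hrc
          rcases ht₁ with h1 | h1 <;> rcases ht₂ with h2 | h2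
          · rw [h1, h2]
          · rw [Set.mem_singleton_iff] at h2
            rw [h1, h2, inv_inv] at hrc
            exact absurd hrc hx2
          · rw [Set.mem_singleton_iff] at h1
            rw [h1, h2] at hrc
            have := rc_symm H hrc
            rw [inv_inv] at this
            exact absurd this hx2
          · rw [Set.mem_singleton_iff] at h1 h2
            rw [h1, h2]
        · rintro u (⟨h₁, hh₁, h₂, hh₂, rfl⟩ | ⟨h₁, hh₁, h₂, hh₂, rfl⟩)
          · refine ⟨x, Or.inl rfl, ?_⟩
            have he : h₁ * x * h₂ * x⁻¹ = h₁ * (x * h₂ * x⁻¹) := by group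
            rw [he]
            exact H.mul_mem hh₁ (hNorm h₂ hh₂)
          · refine ⟨x⁻¹, Or.inr rfl, ?_⟩
            have he : h₁ * x⁻¹ * h₂ * (x⁻¹)⁻¹ = h₁ * (x⁻¹ * h₂ * x) := by group
            rw [he]
            exact H.mul_mem hh₁ (hNorm' h₂ hh₂)
    · -- non-normalizer case
      push_neg at hNorm
      obtain ⟨h₀, hh₀H, hh₀⟩ := hNorm
      obtain ⟨A, hAsub, hApd, hAcov⟩ := exists_reps H (dcos H x).ncard (dcos H x)
        le_rfl (fun u hu h hh => dcos_left_mul H hu hh)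
      obtain ⟨B, hBsub, hBpd, hBcov⟩ := exists_reps H (dcos H x⁻¹).ncard (dcos H x⁻¹)
        le_rfl (fun u hu h hh => dcos_left_mul H hu hh)
      have hAd : ∀ a ∈ A, a ∈ dcos H x := fun a ha => hAsub (Finset.mem_coe.mpr ha)
      have hBd : ∀ b ∈ B, b ∈ dcos H x⁻¹ := fun b hb => hBsub (Finset.mem_coe.mpr hb)
      have hcardA := card_reps H x A hAd hApd hAcov
      have hcardB := card_reps H x⁻¹ B hBd hBpd hBcov
      have hKpos : 0 < ({k : G | k ∈ H ∧ x * k * x⁻¹ ∈ H}).ncard := by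
        rw [Set.ncard_pos (Set.toFinite _)]
        refine ⟨1, H.one_mem, ?_⟩
        have : x * (1 : G) * x⁻¹ = 1 := by group
        rw [this]; exact H.one_mem
      have hAB : A.card = B.card := by
        apply Nat.eq_of_mul_eq_mul_right hKpos
        rw [hcardA, ← hcardB, ncard_K_inv]
      have hA1 : A.card ≠ 1 := by
        intro h1
        obtain ⟨a, hAa⟩ := Finset.card_eq_one.mp h1
        subst hAa
        obtain ⟨a₀, ha₀, hrc₀⟩ := hAcov x (mem_dcos_self H x)
        obtain ⟨a₁, ha₁, hrc₁⟩ := hAcov (x * h₀)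
          ⟨1, H.one_mem, h₀, hh₀H, by group⟩
        rw [Finset.mem_singleton] at ha₀ ha₁
        subst ha₀; subst ha₁
        apply hh₀
        have := rc_trans H hrc₁ (rc_symm H hrc₀)
        simpa [mul_assoc] using this
      have hHcard : (H : Set G).ncard = Nat.card ↥H := (Nat.card_coe_set_eq _).symm
      obtain ⟨k, hk⟩ := (IsPGroup.iff_card (p := 2) (G := ↥H)).mp h2
      have hdvd : A.card ∣ 2 ^ k := ⟨_, by rw [← hk, ← hHcard, ← hcardA]⟩
      obtain ⟨j, _, hj⟩ := (Nat.dvd_prime_pow Nat.prime_two).mp hdvd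
      by_cases hsym : x⁻¹ ∈ dcos H x
      · -- self-paired double coset: split A in half
        have hDeq := dcos_sym_eq H hsym
        have heven : 2 ∣ A.card := by
          rcases Nat.eq_zero_or_pos j with rfl | hjpos
          · exfalso; apply hA1; simpa using hj
          · rw [hj]; exact dvd_pow_self 2 (by omega)
        obtain ⟨r, hr⟩ := heven
        obtain ⟨A₁, hA₁sub, hA₁card⟩ :=
          Finset.exists_subset_card_eq (show r ≤ A.card by omega)
        classical
        have hA₂card : (A \ A₁).card = r := by
          rw [Finset.card_sdiff_of_subset hA₁sub]; omega
        obtain ⟨TE, hTEinv, hTEin, hTEcov, hTEpd⟩ := inner H x r A₁ (A \ A₁)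
          hA₁card hA₂card (Finset.sdiff_disjoint.symm)
          (fun a ha => hAd a (hA₁sub ha))
          (fun b hb => by rw [hDeq]; exact hAd b (Finset.mem_sdiff.mp hb).1)
          (by
            intro u hu v hv hrc
            have huA : u ∈ A := by
              rcases hu with hu | hu
              · exact hA₁sub hu
              · exact (Finset.mem_sdiff.mp hu).1
            have hvA : v ∈ A := by
              rcases hv with hv | hv
              · exact hA₁sub hv
              · exact (Finset.mem_sdiff.mp hv).1
            exact hApd u huA v hvA hrc)
        apply hcomb ↑TE
        · intro t ht
          obtain ⟨c, hc, hrc⟩ := hTEin t (Finset.mem_coe.mp ht)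
          have hcA : c ∈ A := by
            rcases hc with hc | hc
            · exact hA₁sub hc
            · exact (Finset.mem_sdiff.mp hc).1
          exact Or.inl (rc_dcos H (hAd c hcA) hrc)
        · intro t ht
          exact Finset.mem_coe.mpr (hTEinv t (Finset.mem_coe.mp ht))
        · intro t₁ ht₁ t₂ ht₂ hrc
          exact hTEpd t₁ (Finset.mem_coe.mp ht₁) t₂ (Finset.mem_coe.mp ht₂) hrc
        · intro u huE
          have huD : u ∈ dcos H x := by
            rcases huE with hu | hu
            · exact hu
            · rw [← hDeq]; exact hu
          obtain ⟨a, haA, hrc⟩ := hAcov u huD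
          have haAB : a ∈ A₁ ∨ a ∈ A \ A₁ := by
            by_cases h : a ∈ A₁
            · exact Or.inl h
            · exact Or.inr (Finset.mem_sdiff.mpr ⟨haA, h⟩)
          obtain ⟨t, ht, hrct⟩ := hTEcov a haAB
          exact ⟨t, Finset.mem_coe.mpr ht, rc_trans H hrc (rc_symm H hrct)⟩
      · -- non-self-paired double coset
        have hdisjAB : Disjoint A B := by
          rw [Finset.disjoint_left]
          intro a haA haB
          exact hsym (sym_of_both H (hAd a haA) (hBd a haB))
        obtain ⟨TE, hTEinv, hTEin, hTEcov, hTEpd⟩ := inner H x A.card A B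
          rfl hAB.symm hdisjAB hAd hBd
          (by
            intro u hu v hv hrc
            rcases hu with hu | hu <;> rcases hv with hv | hv
            · exact hApd u hu v hv hrc
            · exfalso
              exact hsym (sym_of_both H (hAd u hu)
                (rc_dcos H (hBd v hv) hrc))
            · exfalso
              exact hsym (sym_of_both H (rc_dcos H (hAd v hv) hrc)
                (hBd u hu))
            · exact hBpd u hu v hv hrc)
        apply hcomb ↑TE
        · intro t ht
          obtain ⟨c, hc, hrc⟩ := hTEin t (Finset.mem_coe.mp ht)
          rcases hc with hc | hc
          · exact Or.inl (rc_dcos H (hAd c hc) hrc)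
          · exact Or.inr (rc_dcos H (hBd c hc) hrc)
        · intro t ht
          exact Finset.mem_coe.mpr (hTEinv t (Finset.mem_coe.mp ht))
        · intro t₁ ht₁ t₂ ht₂ hrc
          exact hTEpd t₁ (Finset.mem_coe.mp ht₁) t₂ (Finset.mem_coe.mp ht₂) hrc
        · rintro u (huD | huD)
          · obtain ⟨a, haA, hrc⟩ := hAcov u huD
            obtain ⟨t, ht, hrct⟩ := hTEcov a (Or.inl haA)
            exact ⟨t, Finset.mem_coe.mpr ht, rc_trans H hrc (rc_symm H hrct)⟩
          · obtain ⟨b, hbB, hrc⟩ := hBcov u huD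
            obtain ⟨t, ht, hrct⟩ := hTEcov b (Or.inr hbB)
            exact ⟨t, Finset.mem_coe.mpr ht, rc_trans H hrc (rc_symm H hrct)⟩

end Stmt12Aux


theorem stmt_12 {G : Type*} [Group G] [Fintype G] (heven : Even (Nat.card G)) :
    ∃ H : Subgroup G, ⊥ < H ∧ IsPGroup 2 H ∧
      (∃! x : G, x ∈ H ∧ x ≠ 1 ∧ x ^ 2 = 1) ∧
      ∃ T : Set G, Subgroup.IsComplement (H : Set G) T ∧ T⁻¹ = T := by
  classical
  haveI : Fact (Nat.Prime 2) := ⟨Nat.prime_two⟩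
  -- Cauchy: an element of order 2
  have hdvd : 2 ∣ Fintype.card G := by
    rw [← Nat.card_eq_fintype_card]
    exact heven.two_dvd
  obtain ⟨a, ha⟩ := exists_prime_orderOf_dvd_card 2 hdvd
  have ha1 : a ≠ 1 := by
    intro h; rw [h, orderOf_one] at ha; omega
  have ha2 : a ^ 2 = 1 := by rw [← ha]; exact pow_orderOf_eq_one a
  have hzpow_mem : ∀ y ∈ Subgroup.zpowers a, y = 1 ∨ y = a := by
    intro y hy
    obtain ⟨k, hk⟩ := Subgroup.mem_zpowers_iff.mp hy
    have h1 : a ^ (2 : ℤ) = 1 := by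
      rw [show (2 : ℤ) = ((2 : ℕ) : ℤ) by norm_num, zpow_natCast, ha2]
    rcases Int.even_or_odd k with ⟨q, hq⟩ | ⟨q, hq⟩
    · left
      rw [← hk, hq, show q + q = 2 * q by ring, zpow_mul, h1, one_zpow]
    · right
      rw [← hk, hq, zpow_add, zpow_mul, h1, one_zpow, one_mul, zpow_one]
  -- the family of 2-subgroups with a unique involution
  set P : Subgroup G → Prop :=
    fun K => IsPGroup 2 K ∧ ∃! y : G, y ∈ K ∧ y ≠ 1 ∧ y ^ 2 = 1 with hP
  have hP0 : P (Subgroup.zpowers a) := by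
    constructor
    · exact IsPGroup.iff_card.mpr ⟨1, by rw [Nat.card_zpowers, ha]; norm_num⟩
    · refine ⟨a, ⟨Subgroup.mem_zpowers a, ha1, ha2⟩, ?_⟩
      rintro y ⟨hy, hy1, _⟩
      rcases hzpow_mem y hy with rfl | rfl
      · exact absurd rfl hy1
      · rfl
  haveI : Finite (Subgroup G) :=
    Finite.of_injective (fun K : Subgroup G => (K : Set G)) SetLike.coe_injective
  obtain ⟨H, hHS, hHmax⟩ := Set.Finite.exists_maximalFor
    (fun K : Subgroup G => Nat.card ↥K) {K | P K} (Set.toFinite _)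
    ⟨Subgroup.zpowers a, hP0⟩
  obtain ⟨h2, z, ⟨hzH, hz1, hz2⟩, huniq⟩ := hHS
  obtain ⟨k, hk⟩ := (IsPGroup.iff_card (p := 2) (G := ↥H)).mp h2
  -- the key normalizer condition from maximality
  have hP1 : ∀ n : G, (∀ h ∈ H, n * h * n⁻¹ ∈ H) → n * n ∈ H →
      ∃ t, t * n⁻¹ ∈ H ∧ t * t = 1 := by
    intro n hn hn2
    by_cases hnH : n ∈ H
    · refine ⟨1, ?_, by simp⟩
      simpa using H.inv_mem hnH
    by_contra hno
    push_neg at hno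
    have hn' := Stmt12Aux.conj_inv_mem H hn
    set M : Subgroup G :=
      { carrier := (H : Set G) ∪ (fun h => h * n) '' (H : Set G)
        mul_mem' := by
          rintro x y (hx | ⟨h, hh, rfl⟩) (hy | ⟨h', hh', rfl⟩)
          · exact Or.inl (H.mul_mem hx hy)
          · refine Or.inr ⟨x * h', H.mul_mem hx hh', by group⟩
          · refine Or.inr ⟨h * (n * y * n⁻¹), H.mul_mem hh (hn y hy), by group⟩
          · refine Or.inl ?_
            have he : (h * n) * (h' * n) = (h * (n * h' * n⁻¹)) * (n * n) := by
              group
            rw [he]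
            exact H.mul_mem (H.mul_mem hh (hn h' hh')) hn2
        one_mem' := Or.inl H.one_mem
        inv_mem' := by
          rintro x (hx | ⟨h, hh, rfl⟩)
          · exact Or.inl (H.inv_mem hx)
          · refine Or.inr ⟨(n⁻¹ * h⁻¹ * n) * (n * n)⁻¹,
              H.mul_mem (hn' h⁻¹ (H.inv_mem hh)) (H.inv_mem hn2), by group⟩ } with hM
    have hzM : z ∈ M := Or.inl hzH
    have hdisj : Disjoint (H : Set G) ((fun h => h * n) '' (H : Set G)) := by
      rw [Set.disjoint_left]
      rintro u huH ⟨h, hh, rfl⟩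
      apply hnH
      have : h⁻¹ * (h * n) ∈ H := H.mul_mem (H.inv_mem hh) huH
      simpa [mul_assoc] using this
    have hcardM : Nat.card ↥M = 2 ^ (k + 1) := by
      rw [show Nat.card ↥M = (M : Set G).ncard from Nat.card_coe_set_eq _]
      have h1 : (M : Set G) = (H : Set G) ∪ (fun h => h * n) '' (H : Set G) := rfl
      rw [h1, Set.ncard_union_eq hdisj (Set.toFinite _) (Set.toFinite _),
        Set.ncard_image_of_injective _ (mul_left_injective n)]
      have h3 : (H : Set G).ncard = 2 ^ k := by
        rw [show (H : Set G).ncard = Nat.card ↥H from (Nat.card_coe_set_eq _).symm]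
        exact hk
      rw [h3]
      ring
    have hMP : P M := by
      refine ⟨IsPGroup.iff_card.mpr ⟨k + 1, hcardM⟩, z, ⟨hzM, hz1, hz2⟩, ?_⟩
      rintro y ⟨hyM, hy1, hy2⟩
      rcases hyM with hyH | ⟨h, hh, rfl⟩
      · exact huniq y ⟨hyH, hy1, hy2⟩
      · exfalso
        refine hno (h * n) (by simpa using hh) ?_
        rw [← pow_two]
        exact hy2
    have heq : Nat.card ↥M ≤ Nat.card ↥H := hHmax (j := M) hMP (by
      show Nat.card ↥H ≤ Nat.card ↥M
      rw [hk, hcardM]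
      exact Nat.pow_le_pow_right (by norm_num) (by omega))
    rw [hk, hcardM, pow_succ] at heq
    have hpos : 0 < 2 ^ k := pow_pos (by norm_num) k
    omega
  -- apply the construction
  obtain ⟨T, _, hTinv, hTpd, hTcov⟩ := Stmt12Aux.outer H hP1 h2 (Set.univ : Set G).ncard
    Set.univ le_rfl (by intros; trivial) (by intros; trivial)
  refine ⟨H, ?_, h2, ⟨z, ⟨hzH, hz1, hz2⟩, huniq⟩, T, ?_, ?_⟩
  · refine bot_lt_iff_ne_bot.mpr ?_
    intro hb
    rw [hb] at hzH
    exact hz1 (Subgroup.mem_bot.mp hzH)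
  · rw [Subgroup.isComplement_iff_existsUnique]
    intro g
    obtain ⟨t, htT, hrc⟩ := hTcov g trivial
    refine ⟨(⟨g * t⁻¹, hrc⟩, ⟨t, htT⟩), by simp, ?_⟩
    rintro ⟨⟨h, hh⟩, ⟨t', ht'⟩⟩ he
    simp only [Prod.mk.injEq, Subtype.mk.injEq]
    have he' : h * t' = g := he
    have hgt' : g * t'⁻¹ ∈ H := by
      rw [← he']
      simpa [mul_assoc] using hh
    have htt : t' = t := hTpd t' ht' t htT (Stmt12Aux.rc_trans H (Stmt12Aux.rc_symm H hgt') hrc)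
    constructor
    · rw [← he', htt]; group
    · exact htt
  · ext u
    rw [Set.mem_inv]
    constructor
    · intro hu
      have := hTinv u⁻¹ hu
      rwa [inv_inv] at this
    · intro hu
      exact hTinv u hu
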